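/- The volume of the confined polytope P(3,h) = {(z_1,z_2,z_3) ∈ [-1,1]³ : |z_i + ⋯ + z_j| ≤ h for all 1 ≤ i ≤ j ≤ 3} equals 23/3 when h = 2, 155/24 when h = 3/2, 4 when h = 1, and 1/2 when h = 1/2. -/

import Mathlib

open MeasureTheory Finset

/-- The slab-confinement polytope `P(3,h) ⊂ [-1,1]³`: points of the cube all of
whose consecutive-coordinate window sums `z_i + ⋯ + z_j` have absolute value at
most `h`. -/
def slabPolytope (h : ℝ) : Set (Fin 3 → ℝ) :=
  {z | (∀ i, |z i| ≤ 1) ∧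
    ∀ i j : Fin 3, i ≤ j → |∑ k ∈ Finset.Icc i j, z k| ≤ h}

namespace SlabAux

open Pointwise

/-! ### The slice-length function and inner integral -/

noncomputable def g (h x y : ℝ) : ℝ :=
  min 1 (min (h - y) (h - x - y)) - max (-1) (max (-h - y) (-h - x - y))

lemma g_cont (h x : ℝ) : Continuous fun y => g h x y := by
  unfold g; fun_prop

noncomputable def G (h x : ℝ) : ℝ :=
  ∫ y in (max (-1) (-h - x))..(min 1 (h - x)), g h x y

lemma min3 (a b c : ℝ) : min a (min b c) = -max (-a) (max (-b) (-c)) := by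
  rw [max_neg_neg, max_neg_neg, neg_neg]

lemma g_neg (h x y : ℝ) : g h (-x) (-y) = g h x y := by
  unfold g
  rw [min3, min3]
  ring_nf

lemma G_neg (h x : ℝ) : G h (-x) = G h x := by
  unfold G
  have e1 : (∫ y in (max (-1) (-h - -x))..(min 1 (h - -x)), g h (-x) y)
      = ∫ y in (max (-1) (-h - -x))..(min 1 (h - -x)), g h x (-y) := by
    apply intervalIntegral.integral_congr
    intro y _
    have := g_neg h x (-y)
    rwa [neg_neg] at this
  rw [e1, intervalIntegral.integral_comp_neg (g h x)]
  have hb : -(min 1 (h - -x)) = max (-1) (-h - x) := by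
    rw [show (-h - x : ℝ) = -(h - -x) by ring, max_neg_neg]
  have ha : -(max (-1) (-h - -x)) = min 1 (h - x) := by
    rw [show (-h - -x : ℝ) = -(h - x) by ring, max_neg_neg, neg_neg]
  rw [hb, ha]

/-! ### Elementary integrals -/

lemma integral_linear (a b c d : ℝ) :
    (∫ y in a..b, (c + d * y)) = c * (b - a) + d * ((b ^ 2 - a ^ 2) / 2) := by
  rw [intervalIntegral.integral_add (continuous_const.intervalIntegrable _ _)
      (((by fun_prop : Continuous fun y : ℝ => d * y)).intervalIntegrable _ _),
    intervalIntegral.integral_const, intervalIntegral.integral_const_mul]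
  simp only [smul_eq_mul, integral_id]
  ring

lemma integral_quad (a b c d e : ℝ) :
    (∫ y in a..b, (c + d * y + e * y ^ 2))
      = c * (b - a) + d * ((b ^ 2 - a ^ 2) / 2) + e * ((b ^ 3 - a ^ 3) / 3) := by
  rw [intervalIntegral.integral_add
      (((by fun_prop : Continuous fun y : ℝ => c + d * y)).intervalIntegrable _ _)
      (((by fun_prop : Continuous fun y : ℝ => e * y ^ 2)).intervalIntegrable _ _),
    intervalIntegral.integral_add (continuous_const.intervalIntegrable _ _)
      (((by fun_prop : Continuous fun y : ℝ => d * y)).intervalIntegrable _ _),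
    intervalIntegral.integral_const, intervalIntegral.integral_const_mul,
    intervalIntegral.integral_const_mul]
  simp only [smul_eq_mul, integral_id, integral_pow]
  norm_num
  ring

/-! ### Computation of the inner integral `G h x` for `x ≥ 0` -/

lemma G2 {x : ℝ} (h0 : 0 ≤ x) (h1 : x ≤ 1) : G 2 x = 4 - x ^ 2 / 2 := by
  unfold G
  rw [show max (-1 : ℝ) (-2 - x) = -1 from max_eq_left (by linarith),
      show min (1 : ℝ) (2 - x) = 1 from min_eq_left (by linarith)]
  rw [← intervalIntegral.integral_add_adjacent_intervals (a := (-1 : ℝ)) (b := 1 - x) (c := 1)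
      ((g_cont 2 x).intervalIntegrable _ _) ((g_cont 2 x).intervalIntegrable _ _)]
  have p1 : (∫ y in (-1 : ℝ)..(1 - x), g 2 x y) = ∫ y in (-1 : ℝ)..(1 - x), (2 + 0 * y) := by
    apply intervalIntegral.integral_congr
    intro y hy
    rw [Set.uIcc_of_le (by linarith)] at hy
    obtain ⟨hy1, hy2⟩ := hy
    unfold g
    rw [min_eq_left (le_min (by linarith) (by linarith)),
        max_eq_left (max_le (by linarith) (by linarith))]
    ring
  have p2 : (∫ y in (1 - x)..(1 : ℝ), g 2 x y)
      = ∫ y in (1 - x)..(1 : ℝ), ((3 - x) + (-1) * y) := by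
    apply intervalIntegral.integral_congr
    intro y hy
    rw [Set.uIcc_of_le (by linarith)] at hy
    obtain ⟨hy1, hy2⟩ := hy
    unfold g
    rw [min_eq_right (by linarith : 2 - x - y ≤ 2 - y),
        min_eq_right (by linarith : 2 - x - y ≤ 1),
        max_eq_left (max_le (by linarith) (by linarith))]
    ring
  rw [p1, p2, integral_linear, integral_linear]
  ring

lemma G1 {x : ℝ} (h0 : 0 ≤ x) (h1 : x ≤ 1) : G 1 x = 3 - 2 * x := by
  unfold G
  rw [show max (-1 : ℝ) (-1 - x) = -1 from max_eq_left (by linarith),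
      show min (1 : ℝ) (1 - x) = 1 - x from min_eq_right (by linarith)]
  rw [← intervalIntegral.integral_add_adjacent_intervals (a := (-1 : ℝ)) (b := 0) (c := 1 - x)
      ((g_cont 1 x).intervalIntegrable _ _) ((g_cont 1 x).intervalIntegrable _ _),
    ← intervalIntegral.integral_add_adjacent_intervals (a := (-1 : ℝ)) (b := -x) (c := 0)
      ((g_cont 1 x).intervalIntegrable _ _) ((g_cont 1 x).intervalIntegrable _ _)]
  have p1 : (∫ y in (-1 : ℝ)..(-x), g 1 x y) = ∫ y in (-1 : ℝ)..(-x), (2 + 1 * y) := by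
    apply intervalIntegral.integral_congr
    intro y hy
    rw [Set.uIcc_of_le (by linarith)] at hy
    obtain ⟨hy1, hy2⟩ := hy
    unfold g
    rw [min_eq_left (le_min (by linarith) (by linarith)),
        max_eq_left (by linarith : -1 - x - y ≤ -1 - y),
        max_eq_right (by linarith : (-1 : ℝ) ≤ -1 - y)]
    ring
  have p2 : (∫ y in (-x : ℝ)..0, g 1 x y) = ∫ y in (-x : ℝ)..0, ((2 - x) + 0 * y) := by
    apply intervalIntegral.integral_congr
    intro y hy
    rw [Set.uIcc_of_le (by linarith)] at hy
    obtain ⟨hy1, hy2⟩ := hy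
    unfold g
    rw [min_eq_right (by linarith : 1 - x - y ≤ 1 - y),
        min_eq_right (by linarith : 1 - x - y ≤ 1),
        max_eq_left (by linarith : -1 - x - y ≤ -1 - y),
        max_eq_right (by linarith : (-1 : ℝ) ≤ -1 - y)]
    ring
  have p3 : (∫ y in (0 : ℝ)..(1 - x), g 1 x y)
      = ∫ y in (0 : ℝ)..(1 - x), ((2 - x) + (-1) * y) := by
    apply intervalIntegral.integral_congr
    intro y hy
    rw [Set.uIcc_of_le (by linarith)] at hy
    obtain ⟨hy1, hy2⟩ := hy
    unfold g
    rw [min_eq_right (by linarith : 1 - x - y ≤ 1 - y),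
        min_eq_right (by linarith : 1 - x - y ≤ 1),
        max_eq_left (by linarith : -1 - x - y ≤ -1 - y),
        max_eq_left (by linarith : -1 - y ≤ (-1 : ℝ))]
    ring
  rw [p1, p2, p3, integral_linear, integral_linear, integral_linear]
  ring

lemma G32a {x : ℝ} (h0 : 0 ≤ x) (h1 : x ≤ 1 / 2) : G (3 / 2) x = 15 / 4 - x / 2 - x ^ 2 / 2 := by
  unfold G
  rw [show max (-1 : ℝ) (-(3 / 2) - x) = -1 from max_eq_left (by linarith),
      show min (1 : ℝ) (3 / 2 - x) = 1 from min_eq_left (by linarith)]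
  rw [← intervalIntegral.integral_add_adjacent_intervals (a := (-1 : ℝ)) (b := 1 / 2 - x) (c := 1)
      ((g_cont (3 / 2) x).intervalIntegrable _ _) ((g_cont (3 / 2) x).intervalIntegrable _ _),
    ← intervalIntegral.integral_add_adjacent_intervals (a := (-1 : ℝ)) (b := -(1 / 2))
      (c := 1 / 2 - x)
      ((g_cont (3 / 2) x).intervalIntegrable _ _) ((g_cont (3 / 2) x).intervalIntegrable _ _)]
  have p1 : (∫ y in (-1 : ℝ)..(-(1 / 2)), g (3 / 2) x y)
      = ∫ y in (-1 : ℝ)..(-(1 / 2)), (5 / 2 + 1 * y) := by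
    apply intervalIntegral.integral_congr
    intro y hy
    rw [Set.uIcc_of_le (by linarith)] at hy
    obtain ⟨hy1, hy2⟩ := hy
    unfold g
    rw [min_eq_left (le_min (by linarith) (by linarith)),
        max_eq_left (by linarith : -(3 / 2) - x - y ≤ -(3 / 2) - y),
        max_eq_right (by linarith : (-1 : ℝ) ≤ -(3 / 2) - y)]
    ring
  have p2 : (∫ y in (-(1 / 2) : ℝ)..(1 / 2 - x), g (3 / 2) x y)
      = ∫ y in (-(1 / 2) : ℝ)..(1 / 2 - x), (2 + 0 * y) := by
    apply intervalIntegral.integral_congr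
    intro y hy
    rw [Set.uIcc_of_le (by linarith)] at hy
    obtain ⟨hy1, hy2⟩ := hy
    unfold g
    rw [min_eq_left (le_min (by linarith) (by linarith)),
        max_eq_left (by linarith : -(3 / 2) - x - y ≤ -(3 / 2) - y),
        max_eq_left (by linarith : -(3 / 2) - y ≤ (-1 : ℝ))]
    ring
  have p3 : (∫ y in (1 / 2 - x : ℝ)..1, g (3 / 2) x y)
      = ∫ y in (1 / 2 - x : ℝ)..1, ((5 / 2 - x) + (-1) * y) := by
    apply intervalIntegral.integral_congr
    intro y hy
    rw [Set.uIcc_of_le (by linarith)] at hy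
    obtain ⟨hy1, hy2⟩ := hy
    unfold g
    rw [min_eq_right (by linarith : 3 / 2 - x - y ≤ 3 / 2 - y),
        min_eq_right (by linarith : 3 / 2 - x - y ≤ 1),
        max_eq_left (by linarith : -(3 / 2) - x - y ≤ -(3 / 2) - y),
        max_eq_left (by linarith : -(3 / 2) - y ≤ (-1 : ℝ))]
    ring
  rw [p1, p2, p3, integral_linear, integral_linear, integral_linear]
  ring

lemma G32b {x : ℝ} (h0 : 1 / 2 ≤ x) (h1 : x ≤ 1) : G (3 / 2) x = 35 / 8 - 2 * x := by
  unfold G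
  rw [show max (-1 : ℝ) (-(3 / 2) - x) = -1 from max_eq_left (by linarith),
      show min (1 : ℝ) (3 / 2 - x) = 3 / 2 - x from min_eq_right (by linarith)]
  rw [← intervalIntegral.integral_add_adjacent_intervals (a := (-1 : ℝ)) (b := 1 / 2 - x)
      (c := 3 / 2 - x)
      ((g_cont (3 / 2) x).intervalIntegrable _ _) ((g_cont (3 / 2) x).intervalIntegrable _ _),
    ← intervalIntegral.integral_add_adjacent_intervals (a := (-1 : ℝ)) (b := -(1 / 2))
      (c := 1 / 2 - x)
      ((g_cont (3 / 2) x).intervalIntegrable _ _) ((g_cont (3 / 2) x).intervalIntegrable _ _)]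
  have p1 : (∫ y in (-1 : ℝ)..(-(1 / 2)), g (3 / 2) x y)
      = ∫ y in (-1 : ℝ)..(-(1 / 2)), (5 / 2 + 1 * y) := by
    apply intervalIntegral.integral_congr
    intro y hy
    rw [Set.uIcc_of_le (by linarith)] at hy
    obtain ⟨hy1, hy2⟩ := hy
    unfold g
    rw [min_eq_left (le_min (by linarith) (by linarith)),
        max_eq_left (by linarith : -(3 / 2) - x - y ≤ -(3 / 2) - y),
        max_eq_right (by linarith : (-1 : ℝ) ≤ -(3 / 2) - y)]
    ring
  have p2 : (∫ y in (-(1 / 2) : ℝ)..(1 / 2 - x), g (3 / 2) x y)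
      = ∫ y in (-(1 / 2) : ℝ)..(1 / 2 - x), (2 + 0 * y) := by
    apply intervalIntegral.integral_congr
    intro y hy
    rw [Set.uIcc_of_le (by linarith)] at hy
    obtain ⟨hy1, hy2⟩ := hy
    unfold g
    rw [min_eq_left (le_min (by linarith) (by linarith)),
        max_eq_left (by linarith : -(3 / 2) - x - y ≤ -(3 / 2) - y),
        max_eq_left (by linarith : -(3 / 2) - y ≤ (-1 : ℝ))]
    ring
  have p3 : (∫ y in (1 / 2 - x : ℝ)..(3 / 2 - x), g (3 / 2) x y)
      = ∫ y in (1 / 2 - x : ℝ)..(3 / 2 - x), ((5 / 2 - x) + (-1) * y) := by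
    apply intervalIntegral.integral_congr
    intro y hy
    rw [Set.uIcc_of_le (by linarith)] at hy
    obtain ⟨hy1, hy2⟩ := hy
    unfold g
    rw [min_eq_right (by linarith : 3 / 2 - x - y ≤ 3 / 2 - y),
        min_eq_right (by linarith : 3 / 2 - x - y ≤ 1),
        max_eq_left (by linarith : -(3 / 2) - x - y ≤ -(3 / 2) - y),
        max_eq_left (by linarith : -(3 / 2) - y ≤ (-1 : ℝ))]
    ring
  rw [p1, p2, p3, integral_linear, integral_linear, integral_linear]
  ring

/-! ### The product-space version of the polytope and its volume as an integral -/

def T (h : ℝ) : Set (ℝ × ℝ × ℝ) :=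
  {p | |p.1| ≤ 1 ∧ |p.2.1| ≤ 1 ∧ |p.2.2| ≤ 1 ∧
    |p.1 + p.2.1| ≤ h ∧ |p.2.1 + p.2.2| ≤ h ∧ |p.1 + p.2.1 + p.2.2| ≤ h}

lemma measurable_T (h : ℝ) : MeasurableSet (T h) := by
  have : IsClosed (T h) := by
    unfold T
    simp only [Set.setOf_and]
    refine (IsClosed.inter ?_ (IsClosed.inter ?_ (IsClosed.inter ?_
      (IsClosed.inter ?_ (IsClosed.inter ?_ ?_))))) <;>
      exact isClosed_le (by fun_prop) continuous_const
  exact this.measurableSet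

lemma lint_Icc {a b : ℝ} (hab : a ≤ b) {p : ℝ → ℝ}
    (hpi : IntegrableOn p (Set.Icc a b))
    (hnn : ∀ x ∈ Set.Icc a b, 0 ≤ p x) :
    (∫⁻ x, Set.indicator (Set.Icc a b) (fun x => ENNReal.ofReal (p x)) x)
      = ENNReal.ofReal (∫ x in a..b, p x) := by
  rw [lintegral_indicator measurableSet_Icc]
  rw [← ofReal_integral_eq_lintegral_ofReal hpi
    ((ae_restrict_iff' measurableSet_Icc).2 (ae_of_all _ hnn))]
  rw [intervalIntegral.integral_of_le hab, MeasureTheory.integral_Icc_eq_integral_Ioc]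

lemma volume_T_eq {h : ℝ} (h1 : 1 ≤ h) {p : ℝ → ℝ}
    (hpi : IntegrableOn p (Set.Icc (-1) 1))
    (hG : ∀ x ∈ Set.Icc (-1 : ℝ) 1, G h x = p x)
    (hnn : ∀ x ∈ Set.Icc (-1 : ℝ) 1, 0 ≤ p x) :
    volume (T h) = ENNReal.ofReal (∫ x in (-1 : ℝ)..1, p x) := by
  rw [← lint_Icc (by norm_num) hpi hnn]
  rw [Measure.volume_eq_prod, Measure.prod_apply (measurable_T h)]
  apply lintegral_congr
  intro x
  by_cases hx : x ∈ Set.Icc (-1 : ℝ) 1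
  · rw [Set.indicator_of_mem hx, ← hG x hx]
    obtain ⟨hx1, hx2⟩ := hx
    have hs : MeasurableSet (Prod.mk x ⁻¹' T h) :=
      (measurable_T h).preimage measurable_prodMk_left
    rw [Measure.volume_eq_prod, Measure.prod_apply hs]
    have hAB : max (-1 : ℝ) (-h - x) ≤ min (1 : ℝ) (h - x) := by
      have a1 : max (-1 : ℝ) (-h - x) ≤ 0 := max_le (by norm_num) (by linarith)
      have a2 : (0 : ℝ) ≤ min (1 : ℝ) (h - x) := le_min (by norm_num) (by linarith)
      linarith
    have step : (fun y => volume (Prod.mk y ⁻¹' (Prod.mk x ⁻¹' T h)))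
        = fun y => Set.indicator (Set.Icc (max (-1 : ℝ) (-h - x)) (min (1 : ℝ) (h - x)))
            (fun y => ENNReal.ofReal (g h x y)) y := by
      funext y
      by_cases hy : y ∈ Set.Icc (max (-1 : ℝ) (-h - x)) (min (1 : ℝ) (h - x))
      · rw [Set.indicator_of_mem hy]
        obtain ⟨hy1, hy2⟩ := hy
        have hy1' : (-1 : ℝ) ≤ y := le_trans (le_max_left _ _) hy1
        have hy2' : y ≤ 1 := le_trans hy2 (min_le_left _ _)
        have hy3 : -h - x ≤ y := le_trans (le_max_right _ _) hy1
        have hy4 : y ≤ h - x := le_trans hy2 (min_le_right _ _)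
        have hset : Prod.mk y ⁻¹' (Prod.mk x ⁻¹' T h)
            = Set.Icc (max (-1) (max (-h - y) (-h - x - y)))
                (min 1 (min (h - y) (h - x - y))) := by
          ext z
          simp only [T, Set.mem_preimage, Set.mem_setOf_eq, Set.mem_Icc, abs_le,
            le_min_iff, max_le_iff]
          constructor
          · rintro ⟨-, -, ⟨c1, c2⟩, -, ⟨c3, c4⟩, c5, c6⟩
            refine ⟨⟨?_, ?_, ?_⟩, ?_, ?_, ?_⟩ <;> linarith
          · rintro ⟨⟨d1, d2, d3⟩, d4, d5, d6⟩
            refine ⟨⟨?_, ?_⟩, ⟨?_, ?_⟩, ⟨?_, ?_⟩, ⟨?_, ?_⟩, ⟨?_, ?_⟩, ?_, ?_⟩ <;> linarith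
        rw [hset, Real.volume_Icc]
        rfl
      · rw [Set.indicator_of_notMem hy]
        have hset : Prod.mk y ⁻¹' (Prod.mk x ⁻¹' T h) = ∅ := by
          ext z
          simp only [T, Set.mem_preimage, Set.mem_setOf_eq, Set.mem_empty_iff_false, iff_false]
          rintro ⟨-, hy', -, hxy, -, -⟩
          obtain ⟨e1, e2⟩ := abs_le.1 hy'
          obtain ⟨e3, e4⟩ := abs_le.1 hxy
          exact hy ⟨max_le (by linarith) (by linarith), le_min (by linarith) (by linarith)⟩
        rw [hset]
        simp
    rw [step]
    rw [lint_Icc hAB ((g_cont h x).integrableOn_Icc) ?gnn]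
    · rfl
    case gnn =>
      intro y hy
      obtain ⟨hy1, hy2⟩ := hy
      have hy1' : (-1 : ℝ) ≤ y := le_trans (le_max_left _ _) hy1
      have hy2' : y ≤ 1 := le_trans hy2 (min_le_left _ _)
      have hy3 : -h - x ≤ y := le_trans (le_max_right _ _) hy1
      have hy4 : y ≤ h - x := le_trans hy2 (min_le_right _ _)
      unfold g
      have hmx : max (-1 : ℝ) (max (-h - y) (-h - x - y)) ≤ 0 :=
        max_le (by norm_num) (max_le (by linarith) (by linarith))
      have hmn : (0 : ℝ) ≤ min 1 (min (h - y) (h - x - y)) :=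
        le_min (by norm_num) (le_min (by linarith) (by linarith))
      linarith
  · rw [Set.indicator_of_notMem hx]
    have hset : Prod.mk x ⁻¹' T h = ∅ := by
      ext q
      simp only [T, Set.mem_preimage, Set.mem_setOf_eq, Set.mem_empty_iff_false, iff_false]
      rintro ⟨hx', -⟩
      exact hx (abs_le.1 hx')
    rw [hset]
    simp

/-! ### Transport from `Fin 3 → ℝ` to `ℝ × ℝ × ℝ` -/

lemma sum_Icc3 (z : Fin 3 → ℝ) :
    (∑ k ∈ Finset.Icc (0 : Fin 3) 0, z k = z 0) ∧
    (∑ k ∈ Finset.Icc (1 : Fin 3) 1, z k = z 1) ∧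
    (∑ k ∈ Finset.Icc (2 : Fin 3) 2, z k = z 2) ∧
    (∑ k ∈ Finset.Icc (0 : Fin 3) 1, z k = z 0 + z 1) ∧
    (∑ k ∈ Finset.Icc (1 : Fin 3) 2, z k = z 1 + z 2) ∧
    (∑ k ∈ Finset.Icc (0 : Fin 3) 2, z k = z 0 + z 1 + z 2) := by
  refine ⟨?_, ?_, ?_, ?_, ?_, ?_⟩
  · rw [show Finset.Icc (0 : Fin 3) 0 = {0} from by decide, Finset.sum_singleton]
  · rw [show Finset.Icc (1 : Fin 3) 1 = {1} from by decide, Finset.sum_singleton]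
  · rw [show Finset.Icc (2 : Fin 3) 2 = {2} from by decide, Finset.sum_singleton]
  · rw [show Finset.Icc (0 : Fin 3) 1 = {0, 1} from by decide,
      Finset.sum_insert (by decide), Finset.sum_singleton]
  · rw [show Finset.Icc (1 : Fin 3) 2 = {1, 2} from by decide,
      Finset.sum_insert (by decide), Finset.sum_singleton]
  · rw [show Finset.Icc (0 : Fin 3) 2 = {0, 1, 2} from by decide,
      Finset.sum_insert (by decide), Finset.sum_insert (by decide), Finset.sum_singleton,
      ← add_assoc]

lemma slab_eq_preimage {h : ℝ} (h1 : 1 ≤ h) :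
    slabPolytope h = (fun z : Fin 3 → ℝ => (z 0, z 1, z 2)) ⁻¹' T h := by
  ext z
  obtain ⟨s00, s11, s22, s01, s12, s02⟩ := sum_Icc3 z
  simp only [slabPolytope, T, Set.mem_preimage, Set.mem_setOf_eq]
  constructor
  · rintro ⟨H1, H2⟩
    refine ⟨H1 0, H1 1, H1 2, ?_, ?_, ?_⟩
    · have := H2 0 1 (by decide); rwa [s01] at this
    · have := H2 1 2 (by decide); rwa [s12] at this
    · have := H2 0 2 (by decide); rwa [s02] at this
  · rintro ⟨c1, c2, c3, c4, c5, c6⟩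
    refine ⟨fun i => ?_, fun i j hij => ?_⟩
    · fin_cases i <;> assumption
    · fin_cases i <;> fin_cases j <;> beta_reduce <;>
        simp only [Fin.zero_eta, Fin.mk_one, show (⟨2, by omega⟩ : Fin 3) = 2 from rfl] <;>
        first
          | exact absurd hij (by decide)
          | (rw [s00]; linarith)
          | (rw [s11]; linarith)
          | (rw [s22]; linarith)
          | (rw [s01]; exact c4)
          | (rw [s12]; exact c5)
          | (rw [s02]; exact c6)

lemma volume_slab {h : ℝ} (h1 : 1 ≤ h) : volume (slabPolytope h) = volume (T h) := by
  have e1 := MeasureTheory.volume_preserving_piFinSuccAbove (fun _ : Fin 3 => ℝ) 0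
  have e2 := MeasureTheory.volume_preserving_finTwoArrow ℝ
  have e3 : MeasurePreserving
      (fun q : ℝ × (Fin 2 → ℝ) => (q.1, (MeasurableEquiv.finTwoArrow q.2 : ℝ × ℝ)))
      volume volume := by
    have := (MeasurePreserving.id (volume : Measure ℝ)).prod e2
    rw [← Measure.volume_eq_prod, ← Measure.volume_eq_prod] at this
    exact this
  have e : MeasurePreserving (fun z : Fin 3 → ℝ => (z 0, z 1, z 2))
      (volume : Measure (Fin 3 → ℝ)) volume := by
    have he := e3.comp e1
    convert he using 1
    · rfl
    · rfl
  rw [slab_eq_preimage h1, e.measure_preimage (measurable_T h).nullMeasurableSet]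

/-! ### The three inner-integral profiles on `[-1, 1]` -/

lemma hG2 : ∀ x ∈ Set.Icc (-1 : ℝ) 1, G 2 x = 4 + 0 * x + (-(1 / 2)) * x ^ 2 := by
  intro x hx
  obtain ⟨hx1, hx2⟩ := hx
  rcases le_total 0 x with hp | hn
  · rw [G2 hp hx2]; ring
  · have hGx : G 2 x = G 2 (-x) := by
      have := G_neg 2 (-x); rwa [neg_neg] at this
    rw [hGx, G2 (by linarith) (by linarith)]; ring

lemma hG1 : ∀ x ∈ Set.Icc (-1 : ℝ) 1, G 1 x = 3 - 2 * |x| := by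
  intro x hx
  obtain ⟨hx1, hx2⟩ := hx
  rcases le_total 0 x with hp | hn
  · rw [G1 hp hx2, abs_of_nonneg hp]
  · have hGx : G 1 x = G 1 (-x) := by
      have := G_neg 1 (-x); rwa [neg_neg] at this
    rw [hGx, G1 (by linarith) (by linarith), abs_of_nonpos hn]

lemma hG32 : ∀ x ∈ Set.Icc (-1 : ℝ) 1,
    G (3 / 2) x = min (35 / 8 - 2 * |x|) (15 / 4 - |x| / 2 - x ^ 2 / 2) := by
  intro x hx
  obtain ⟨hx1, hx2⟩ := hx
  rcases le_total 0 x with hp | hn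
  · rw [abs_of_nonneg hp]
    rcases le_total x (1 / 2) with hsm | hlg
    · rw [G32a hp hsm, min_eq_right (by
        nlinarith [mul_nonneg (by linarith : (0 : ℝ) ≤ 1 / 2 - x)
          (by linarith : (0 : ℝ) ≤ 5 / 2 - x)])]
    · rw [G32b hlg hx2, min_eq_left (by
        nlinarith [mul_nonneg (by linarith : (0 : ℝ) ≤ x - 1 / 2)
          (by linarith : (0 : ℝ) ≤ 5 / 2 - x)])]
  · have hGx : G (3 / 2) x = G (3 / 2) (-x) := by
      have := G_neg (3 / 2) (-x); rwa [neg_neg] at this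
    rw [hGx, abs_of_nonpos hn]
    rcases le_total (-x) (1 / 2) with hsm | hlg
    · rw [G32a (by linarith) hsm, min_eq_right (by
        nlinarith [mul_nonneg (by linarith : (0 : ℝ) ≤ x + 1 / 2)
          (by linarith : (0 : ℝ) ≤ x + 5 / 2)])]
      ring
    · rw [G32b hlg (by linarith), min_eq_left (by
        nlinarith [mul_nonneg (by linarith : (0 : ℝ) ≤ -1 / 2 - x)
          (by linarith : (0 : ℝ) ≤ x + 5 / 2)])]

/-! ### The three outer integrals -/

lemma I2 : (∫ x in (-1 : ℝ)..1, (4 + 0 * x + (-(1 / 2)) * x ^ 2)) = 23 / 3 := by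
  rw [integral_quad]
  norm_num

lemma I1 : (∫ x in (-1 : ℝ)..1, (3 - 2 * |x|)) = 4 := by
  have hc : Continuous fun x : ℝ => 3 - 2 * |x| := by fun_prop
  rw [← intervalIntegral.integral_add_adjacent_intervals (a := (-1 : ℝ)) (b := 0) (c := 1)
      (hc.intervalIntegrable _ _) (hc.intervalIntegrable _ _)]
  have p1 : (∫ x in (-1 : ℝ)..0, (3 - 2 * |x|)) = ∫ x in (-1 : ℝ)..0, (3 + 2 * x) := by
    apply intervalIntegral.integral_congr
    intro x hx
    rw [Set.uIcc_of_le (by norm_num)] at hx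
    beta_reduce
    rw [abs_of_nonpos hx.2]
    ring
  have p2 : (∫ x in (0 : ℝ)..1, (3 - 2 * |x|)) = ∫ x in (0 : ℝ)..1, (3 + (-2) * x) := by
    apply intervalIntegral.integral_congr
    intro x hx
    rw [Set.uIcc_of_le (by norm_num)] at hx
    beta_reduce
    rw [abs_of_nonneg hx.1]
    ring
  rw [p1, p2, integral_linear, integral_linear]
  norm_num

lemma I32 :
    (∫ x in (-1 : ℝ)..1, min (35 / 8 - 2 * |x|) (15 / 4 - |x| / 2 - x ^ 2 / 2)) = 155 / 24 := by
  have hc : Continuous fun x : ℝ => min (35 / 8 - 2 * |x|) (15 / 4 - |x| / 2 - x ^ 2 / 2) := by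
    fun_prop
  rw [← intervalIntegral.integral_add_adjacent_intervals (a := (-1 : ℝ)) (b := 0) (c := 1)
      (hc.intervalIntegrable _ _) (hc.intervalIntegrable _ _),
    ← intervalIntegral.integral_add_adjacent_intervals (a := (-1 : ℝ)) (b := -(1 / 2)) (c := 0)
      (hc.intervalIntegrable _ _) (hc.intervalIntegrable _ _),
    ← intervalIntegral.integral_add_adjacent_intervals (a := (0 : ℝ)) (b := 1 / 2) (c := 1)
      (hc.intervalIntegrable _ _) (hc.intervalIntegrable _ _)]
  have p1 : (∫ x in (-1 : ℝ)..(-(1 / 2)), min (35 / 8 - 2 * |x|) (15 / 4 - |x| / 2 - x ^ 2 / 2))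
      = ∫ x in (-1 : ℝ)..(-(1 / 2)), (35 / 8 + 2 * x) := by
    apply intervalIntegral.integral_congr
    intro x hx
    rw [Set.uIcc_of_le (by norm_num)] at hx
    obtain ⟨hx1, hx2⟩ := hx
    beta_reduce
    rw [abs_of_nonpos (by linarith), min_eq_left ?_]
    · ring
    · nlinarith [mul_nonneg (by linarith : (0 : ℝ) ≤ -1 / 2 - x)
        (by linarith : (0 : ℝ) ≤ x + 5 / 2)]
  have p2 : (∫ x in (-(1 / 2) : ℝ)..0, min (35 / 8 - 2 * |x|) (15 / 4 - |x| / 2 - x ^ 2 / 2))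
      = ∫ x in (-(1 / 2) : ℝ)..0, (15 / 4 + (1 / 2) * x + (-(1 / 2)) * x ^ 2) := by
    apply intervalIntegral.integral_congr
    intro x hx
    rw [Set.uIcc_of_le (by norm_num)] at hx
    obtain ⟨hx1, hx2⟩ := hx
    beta_reduce
    rw [abs_of_nonpos (by linarith), min_eq_right ?_]
    · ring
    · nlinarith [mul_nonneg (by linarith : (0 : ℝ) ≤ x + 1 / 2)
        (by linarith : (0 : ℝ) ≤ x + 5 / 2)]
  have p3 : (∫ x in (0 : ℝ)..(1 / 2), min (35 / 8 - 2 * |x|) (15 / 4 - |x| / 2 - x ^ 2 / 2))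
      = ∫ x in (0 : ℝ)..(1 / 2), (15 / 4 + (-(1 / 2)) * x + (-(1 / 2)) * x ^ 2) := by
    apply intervalIntegral.integral_congr
    intro x hx
    rw [Set.uIcc_of_le (by norm_num)] at hx
    obtain ⟨hx1, hx2⟩ := hx
    beta_reduce
    rw [abs_of_nonneg (by linarith), min_eq_right ?_]
    · ring
    · nlinarith [mul_nonneg (by linarith : (0 : ℝ) ≤ 1 / 2 - x)
        (by linarith : (0 : ℝ) ≤ 5 / 2 - x)]
  have p4 : (∫ x in (1 / 2 : ℝ)..1, min (35 / 8 - 2 * |x|) (15 / 4 - |x| / 2 - x ^ 2 / 2))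
      = ∫ x in (1 / 2 : ℝ)..1, (35 / 8 + (-2) * x) := by
    apply intervalIntegral.integral_congr
    intro x hx
    rw [Set.uIcc_of_le (by norm_num)] at hx
    obtain ⟨hx1, hx2⟩ := hx
    beta_reduce
    rw [abs_of_nonneg (by linarith), min_eq_left ?_]
    · ring
    · nlinarith [mul_nonneg (by linarith : (0 : ℝ) ≤ x - 1 / 2)
        (by linarith : (0 : ℝ) ≤ 5 / 2 - x)]
  rw [p1, p2, p3, p4, integral_linear,
    show (∫ x in (-(1 / 2) : ℝ)..0, (15 / 4 + (1 / 2) * x + (-(1 / 2)) * x ^ 2))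
      = 15 / 4 * (0 - -(1 / 2)) + 1 / 2 * (((0 : ℝ) ^ 2 - (-(1 / 2)) ^ 2) / 2)
        + (-(1 / 2)) * (((0 : ℝ) ^ 3 - (-(1 / 2)) ^ 3) / 3) from integral_quad _ _ _ _ _,
    show (∫ x in (0 : ℝ)..(1 / 2), (15 / 4 + (-(1 / 2)) * x + (-(1 / 2)) * x ^ 2))
      = 15 / 4 * (1 / 2 - 0) + (-(1 / 2)) * (((1 / 2 : ℝ) ^ 2 - 0 ^ 2) / 2)
        + (-(1 / 2)) * (((1 / 2 : ℝ) ^ 3 - 0 ^ 3) / 3) from integral_quad _ _ _ _ _,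
    integral_linear]
  norm_num

/-! ### The half-scaling relation -/

lemma slab_half : slabPolytope (1 / 2) = (1 / 2 : ℝ) • slabPolytope 1 := by
  ext z
  rw [Set.mem_smul_set_iff_inv_smul_mem₀ (by norm_num : (1 / 2 : ℝ) ≠ 0)]
  simp only [slabPolytope, Set.mem_setOf_eq, Pi.smul_apply, smul_eq_mul,
    show ((1 / 2 : ℝ))⁻¹ = 2 by norm_num]
  constructor
  · rintro ⟨H1, H2⟩
    refine ⟨fun i => ?_, fun i j hij => ?_⟩
    · have := H2 i i le_rfl
      rw [Finset.Icc_self, Finset.sum_singleton] at this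
      rw [abs_mul, abs_two]
      linarith
    · have := H2 i j hij
      rw [← Finset.mul_sum, abs_mul, abs_two]
      linarith
  · rintro ⟨H1, H2⟩
    refine ⟨fun i => ?_, fun i j hij => ?_⟩
    · have := H1 i
      rw [abs_mul, abs_two] at this
      linarith [abs_nonneg (z i)]
    · have := H2 i j hij
      rw [← Finset.mul_sum, abs_mul, abs_two] at this
      linarith

end SlabAux

/-- The volume of `P(3,h)` equals `23/3` for `h = 2`, `155/24` for `h = 3/2`,
`4` for `h = 1`, and `1/2` for `h = 1/2`. -/
theorem slabPolytope_volumes :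
    MeasureTheory.volume (slabPolytope 2) = ENNReal.ofReal (23 / 3) ∧
    MeasureTheory.volume (slabPolytope (3 / 2)) = ENNReal.ofReal (155 / 24) ∧
    MeasureTheory.volume (slabPolytope 1) = ENNReal.ofReal 4 ∧
    MeasureTheory.volume (slabPolytope (1 / 2)) = ENNReal.ofReal (1 / 2) := by
  have hv2 : MeasureTheory.volume (slabPolytope 2) = ENNReal.ofReal (23 / 3) := by
    rw [SlabAux.volume_slab (by norm_num),
      SlabAux.volume_T_eq (by norm_num)
        ((by fun_prop : Continuous fun x : ℝ => 4 + 0 * x + (-(1 / 2)) * x ^ 2).integrableOn_Icc)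
        SlabAux.hG2 (fun x hx => by obtain ⟨h1, h2⟩ := hx; nlinarith),
      SlabAux.I2]
  have hv32 : MeasureTheory.volume (slabPolytope (3 / 2)) = ENNReal.ofReal (155 / 24) := by
    rw [SlabAux.volume_slab (by norm_num),
      SlabAux.volume_T_eq (by norm_num)
        ((by fun_prop : Continuous fun x : ℝ =>
          min (35 / 8 - 2 * |x|) (15 / 4 - |x| / 2 - x ^ 2 / 2)).integrableOn_Icc)
        SlabAux.hG32 (fun x hx => by
          obtain ⟨h1, h2⟩ := hx
          have ha : |x| ≤ 1 := abs_le.2 ⟨h1, h2⟩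
          have hb : (0 : ℝ) ≤ |x| := abs_nonneg x
          refine le_min (by linarith) ?_
          nlinarith [sq_abs x]),
      SlabAux.I32]
  have hv1 : MeasureTheory.volume (slabPolytope 1) = ENNReal.ofReal 4 := by
    rw [SlabAux.volume_slab (by norm_num),
      SlabAux.volume_T_eq (le_refl 1)
        ((by fun_prop : Continuous fun x : ℝ => 3 - 2 * |x|).integrableOn_Icc)
        SlabAux.hG1 (fun x hx => by
          obtain ⟨h1, h2⟩ := hx
          have ha : |x| ≤ 1 := abs_le.2 ⟨h1, h2⟩
          linarith),
      SlabAux.I1]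
  refine ⟨hv2, hv32, hv1, ?_⟩
  rw [SlabAux.slab_half, MeasureTheory.Measure.addHaar_smul, hv1,
    Module.finrank_fin_fun (R := ℝ)]
  rw [show |(1 / 2 : ℝ) ^ 3| = 1 / 8 by norm_num]
  rw [← ENNReal.ofReal_mul (by norm_num)]
  norm_num
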